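/- Every power of a cycle C_n^k with n ≥ 2k + 2 has biclique-chromatic number at most 3. -/

import Mathlib

open SimpleGraph

/-- The `k`-th power of a path on `n` vertices: `v_i ~ v_j` iff `0 < |i - j| ≤ k`. -/
def pathPower (n k : ℕ) : SimpleGraph (Fin n) :=
  SimpleGraph.fromRel (fun i j => i.val ≤ j.val ∧ j.val ≤ i.val + k)

/-- The cyclic distance between two vertices of `ZMod n`. -/
def cdist (n : ℕ) (i j : ZMod n) : ℕ := min (i - j).val (j - i).val

/-- The `k`-th power of a cycle on `n` vertices: `v_i ~ v_j` iff the
cyclic distance between `i` and `j` is between `1` and `k`. -/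
def cyclePower (n k : ℕ) : SimpleGraph (ZMod n) :=
  SimpleGraph.fromRel (fun i j => cdist n i j ≤ k)

/-- `S` induces a complete bipartite subgraph of `G`. -/
def IsCompleteBipartiteSet {V : Type*} (G : SimpleGraph V) (S : Set V) : Prop :=
  ∃ A B : Set V, A ∪ B = S ∧ Disjoint A B ∧
    (∀ a ∈ A, ∀ b ∈ B, G.Adj a b) ∧
    (∀ a ∈ A, ∀ a' ∈ A, ¬ G.Adj a a') ∧
    (∀ b ∈ B, ∀ b' ∈ B, ¬ G.Adj b b')

/-- A biclique: a maximal set of vertices inducing a complete bipartite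
subgraph with at least one edge. -/
def IsBiclique {V : Type*} (G : SimpleGraph V) (S : Set V) : Prop :=
  IsCompleteBipartiteSet G S ∧ (∃ u ∈ S, ∃ v ∈ S, G.Adj u v) ∧
  ∀ T : Set V, S ⊆ T → IsCompleteBipartiteSet G T → T = S

/-- A set is monochromatic under a colouring. -/
def Monochromatic {V α : Type*} (c : V → α) (S : Set V) : Prop :=
  ∃ a, ∀ v ∈ S, c v = a

/-- `G` admits a biclique-colouring with `m` colours. -/
def BicliqueColorable {V : Type*} (G : SimpleGraph V) (m : ℕ) : Prop :=
  ∃ c : V → Fin m, ∀ S : Set V, IsBiclique G S → ¬ Monochromatic c S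

/-- The biclique-chromatic number. -/
noncomputable def bicliqueChromaticNumber {V : Type*} (G : SimpleGraph V) : ℕ :=
  sInf {m | BicliqueColorable G m}

/-- `a`, `b`, `c` induce a path on three vertices (with middle vertex `b`). -/
def IsInducedP3 {V : Type*} (G : SimpleGraph V) (a b c : V) : Prop :=
  a ≠ b ∧ b ≠ c ∧ a ≠ c ∧ G.Adj a b ∧ G.Adj b c ∧ ¬ G.Adj a c

/-- `a`, `b`, `c`, `d` induce a four-cycle (in this cyclic order). -/
def IsInducedC4 {V : Type*} (G : SimpleGraph V) (a b c d : V) : Prop :=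
  a ≠ b ∧ a ≠ c ∧ a ≠ d ∧ b ≠ c ∧ b ≠ d ∧ c ≠ d ∧
  G.Adj a b ∧ G.Adj b c ∧ G.Adj c d ∧ G.Adj d a ∧ ¬ G.Adj a c ∧ ¬ G.Adj b d

namespace Stmt11Aux


/-- block colour -/
def cB (n k b : ℕ) : ℕ :=
  if b = n / (k+1) then (if (n / (k+1)) % 2 = 1 then 1 else 2)
  else if (n / (k+1)) % 2 = 1 ∧ b = n / (k+1) - 1 then 2
  else b % 2

lemma cB_lt (n k b : ℕ) : cB n k b < 3 := by unfold cB; split_ifs <;> omega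

lemma sep2 (n k du dv : ℕ) (hq : 2 ≤ n / (k+1)) (hdv : dv ≤ n / (k+1))
    (hlt : du < dv) (hc : cB n k du = cB n k dv) : du + 2 ≤ dv := by
  unfold cB at hc; split_ifs at hc <;> omega

lemma sepExtra (n k du dv : ℕ) (hq : 2 ≤ n/(k+1)) (hdu : du ≤ n/(k+1))
    (hlt : dv < du) (hfar : n/(k+1) ≤ du - dv + 1) (hc : cB n k du = cB n k dv) :
    du = n/(k+1) ∧ 1 ≤ dv := by
  unfold cB at hc; split_ifs at hc <;> omega

lemma div_eq_near {K u v : ℕ} (hK : 0 < K) (h : u / K = v / K) (huv : u ≤ v) :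
    v - u < K := by
  have e1 := Nat.div_add_mod u K
  have e2 := Nat.div_add_mod v K
  have m1 : u % K < K := Nat.mod_lt _ hK
  have m2 : v % K < K := Nat.mod_lt _ hK
  rw [h] at e1
  omega

lemma sc1 (n k u v : ℕ) (h : 2*k+2 ≤ n) (hv : v < n) (huv : u < v)
    (hne : u/(k+1) ≠ v/(k+1))
    (hc : cB n k (u/(k+1)) = cB n k (v/(k+1))) : u + (k+2) ≤ v := by
  have hK : 0 < k+1 := by omega
  have hq : 2 ≤ n/(k+1) := by rw [Nat.le_div_iff_mul_le hK]; omega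
  have hdd : u/(k+1) < v/(k+1) :=
    lt_of_le_of_ne (Nat.div_le_div_right huv.le) hne
  have hdv : v/(k+1) ≤ n/(k+1) := Nat.div_le_div_right hv.le
  have h2 := sep2 n k _ _ hq hdv hdd hc
  have e1 := Nat.div_add_mod u (k+1)
  have m1 : u % (k+1) < k+1 := Nat.mod_lt _ hK
  have e2 := Nat.div_add_mod v (k+1)
  have h3 : (k+1) * (u/(k+1)) + (k+1)*2 ≤ (k+1) * (v/(k+1)) := by
    calc (k+1) * (u/(k+1)) + (k+1)*2 = (k+1) * (u/(k+1) + 2) := by ring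
    _ ≤ (k+1) * (v/(k+1)) := Nat.mul_le_mul_left _ h2
  omega

lemma sc2 (n k u v : ℕ) (h : 2*k+2 ≤ n) (hu : u < n) (hvu : v < u)
    (hne : u/(k+1) ≠ v/(k+1))
    (hc : cB n k (u/(k+1)) = cB n k (v/(k+1))) : u + (k+2) ≤ n + v := by
  have hK : 0 < k+1 := by omega
  have hq : 2 ≤ n/(k+1) := by rw [Nat.le_div_iff_mul_le hK]; omega
  have hdd : v/(k+1) < u/(k+1) :=
    lt_of_le_of_ne (Nat.div_le_div_right hvu.le) (Ne.symm hne)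
  have hdu : u/(k+1) ≤ n/(k+1) := Nat.div_le_div_right hu.le
  have e1 := Nat.div_add_mod u (k+1)
  have m1 : u % (k+1) < k+1 := Nat.mod_lt _ hK
  have e2 := Nat.div_add_mod v (k+1)
  have hqn : (k+1) * (n/(k+1)) ≤ n := by
    rw [Nat.mul_comm]; exact Nat.div_mul_le_self n (k+1)
  by_cases hcase : u/(k+1) ≤ v/(k+1) + (n/(k+1) - 2)
  · have h3 : (k+1) * (u/(k+1)) ≤ (k+1) * (v/(k+1)) + (k+1) * (n/(k+1) - 2) := by
      calc (k+1)*(u/(k+1)) ≤ (k+1) * (v/(k+1) + (n/(k+1)-2)) :=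
            Nat.mul_le_mul_left _ hcase
        _ = (k+1) * (v/(k+1)) + (k+1) * (n/(k+1) - 2) := by ring
    have h4 : (k+1) * (n/(k+1) - 2) + (k+1)*2 = (k+1)*(n/(k+1)) := by
      rw [← Nat.mul_add]; congr 1; omega
    omega
  · have hfar : n/(k+1) ≤ u/(k+1) - v/(k+1) + 1 := by omega
    obtain ⟨hdq, hdv1⟩ := sepExtra n k _ _ hq hdu hdd hfar hc
    have h5 : (k+1) * 1 ≤ (k+1) * (v/(k+1)) := Nat.mul_le_mul_left _ hdv1
    omega

lemma core (n k i x y : ℕ) (h : 2*k+2 ≤ n) (hi : i < n)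
    (hx1 : 1 ≤ x) (hxk : x ≤ k) (hy1 : 1 ≤ y) (hyk : y ≤ k)
    (hs1 : k+1 ≤ x+y) (hs2 : x+y+(k+1) ≤ n)
    (hc1 : cB n k (i/(k+1)) = cB n k ((i+x)%n/(k+1)))
    (hc2 : cB n k ((i+x)%n/(k+1)) = cB n k ((i+x+y)%n/(k+1))) : False := by
  have hK : 0 < k+1 := by omega
  have hn : 0 < n := by omega
  rcases lt_or_ge (i+x) n with hjx | hjx
  · have ej : (i+x)%n = i+x := Nat.mod_eq_of_lt hjx
    rw [ej] at hc1 hc2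
    rcases lt_or_ge (i+x+y) n with hlx | hlx
    · have el : (i+x+y)%n = i+x+y := Nat.mod_eq_of_lt hlx
      rw [el] at hc2
      by_cases hbil : i/(k+1) = (i+x+y)/(k+1)
      · have := div_eq_near hK hbil (by omega); omega
      · by_cases hbij : i/(k+1) = (i+x)/(k+1)
        · have h6 := sc1 n k (i+x) (i+x+y) h hlx (by omega)
            (by rw [← hbij]; exact hbil) (hc2)
          omega
        · have h6 := sc1 n k i (i+x) h hjx (by omega) hbij hc1
          omega
    · have el : (i+x+y)%n = i+x+y-n := by
        rw [Nat.mod_eq_sub_mod hlx]; exact Nat.mod_eq_of_lt (by omega)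
      rw [el] at hc2
      by_cases hbil : i/(k+1) = (i+x+y-n)/(k+1)
      · have := div_eq_near hK hbil.symm (by omega); omega
      · by_cases hbij : i/(k+1) = (i+x)/(k+1)
        · have h6 := sc2 n k (i+x) (i+x+y-n) h hjx (by omega)
            (fun he => hbil (hbij.trans he)) hc2
          omega
        · have h6 := sc1 n k i (i+x) h hjx (by omega) hbij hc1
          omega
  · have ej : (i+x)%n = i+x-n := by
      rw [Nat.mod_eq_sub_mod hjx]; exact Nat.mod_eq_of_lt (by omega)
    have el : (i+x+y)%n = i+x+y-n := by
      rw [Nat.mod_eq_sub_mod (by omega)]; exact Nat.mod_eq_of_lt (by omega)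
    rw [ej] at hc1 hc2
    rw [el] at hc2
    by_cases hbil : i/(k+1) = (i+x+y-n)/(k+1)
    · have := div_eq_near hK hbil.symm (by omega); omega
    · by_cases hbij : i/(k+1) = (i+x-n)/(k+1)
      · have h6 := sc1 n k (i+x-n) (i+x+y-n) h (by omega) (by omega)
          (fun he => hbil (hbij.trans he)) hc2
        omega
      · have h6 := sc2 n k i (i+x-n) h hi (by omega) hbij hc1
        omega

lemma cdist_comm (n : ℕ) (a b : ZMod n) : cdist n a b = cdist n b a := min_comm _ _

lemma adj_iff {n k : ℕ} {a b : ZMod n} :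
    (cyclePower n k).Adj a b ↔ a ≠ b ∧ cdist n a b ≤ k := by
  unfold cyclePower
  rw [SimpleGraph.fromRel_adj, cdist_comm n b a]
  tauto

lemma castval {n : ℕ} [NeZero n] (a : ZMod n) : ((a.val : ℕ) : ZMod n) = a :=
  ZMod.natCast_rightInverse a

lemma val_pos {n : ℕ} [NeZero n] {a b : ZMod n} (hab : a ≠ b) : 1 ≤ (a - b).val := by
  have h1 : a - b ≠ 0 := sub_ne_zero.mpr hab
  have := (ZMod.val_eq_zero (a - b)).not.mpr h1
  omega

lemma val_sub_add {n : ℕ} [NeZero n] (a b : ZMod n) (hab : a ≠ b) :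
    (a - b).val + (b - a).val = n := by
  have h2 : (a - b) + (b - a) = 0 := by ring
  have h3 : ((a-b).val + (b-a).val) % n = 0 := by
    rw [← ZMod.val_add, h2, ZMod.val_zero]
  have h4 := val_pos hab
  have h5 := val_pos (Ne.symm hab)
  have l1 := ZMod.val_lt (a - b)
  have l2 := ZMod.val_lt (b - a)
  obtain ⟨c, hc⟩ := Nat.dvd_of_mod_eq_zero h3
  rcases c with _ | _ | c
  · omega
  · omega
  · have : n * 2 ≤ n * (c+1+1) := Nat.mul_le_mul_left _ (show 2 ≤ c+1+1 by omega)
    omega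

lemma mod_cases (m t : ℕ) (h : t < 2*m) : t % m = t ∨ t % m = t - m := by
  rcases lt_or_ge t m with hh | hh
  · exact Or.inl (Nat.mod_eq_of_lt hh)
  · right
    rw [Nat.mod_eq_sub_mod hh]
    exact Nat.mod_eq_of_lt (by omega)

lemma p3_struct {n k : ℕ} (h : 2*k+2 ≤ n) {a b c : ZMod n}
    (hp : IsInducedP3 (cyclePower n k) a b c) :
    ∃ x y : ℕ, 1 ≤ x ∧ x ≤ k ∧ 1 ≤ y ∧ y ≤ k ∧ k+1 ≤ x+y ∧ x+y+(k+1) ≤ n ∧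
      ((b = a + (x:ZMod n) ∧ c = a + (x:ZMod n) + (y:ZMod n)) ∨
       (b = c + (x:ZMod n) ∧ a = c + (x:ZMod n) + (y:ZMod n))) := by
  haveI : NeZero n := ⟨by omega⟩
  obtain ⟨hab, hbc, hac, hAab, hAbc, hNac⟩ := hp
  have hx12 := val_sub_add a b hab
  have hy12 := val_sub_add b c hbc
  have hz12 := val_sub_add a c hac
  have hxm : min (a-b).val (b-a).val ≤ k := (adj_iff.mp hAab).2
  have hym : min (b-c).val (c-b).val ≤ k := (adj_iff.mp hAbc).2
  have hzm : ¬ (min (a-c).val (c-a).val ≤ k) :=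
    fun hh => hNac (adj_iff.mpr ⟨hac, hh⟩)
  push_neg at hzm
  have hz1 : k < (c-a).val := lt_of_lt_of_le hzm (min_le_right _ _)
  have hz2 : k < (a-c).val := lt_of_lt_of_le hzm (min_le_left _ _)
  have hx1p := val_pos (Ne.symm hab)
  have hx2p := val_pos hab
  have hy1p := val_pos (Ne.symm hbc)
  have hy2p := val_pos hbc
  have hz1e : (c-a).val = ((c-b).val + (b-a).val) % n := by
    have e : c - a = (c-b) + (b-a) := by ring
    rw [e, ZMod.val_add]
  have hz2e : (a-c).val = ((a-b).val + (b-c).val) % n := by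
    have e : a - c = (a-b) + (b-c) := by ring
    rw [e, ZMod.val_add]
  have l1 := ZMod.val_lt (a - b)
  have l2 := ZMod.val_lt (b - a)
  have l3 := ZMod.val_lt (b - c)
  have l4 := ZMod.val_lt (c - b)
  have mc1 := mod_cases n ((c-b).val + (b-a).val) (by omega)
  have mc2 := mod_cases n ((a-b).val + (b-c).val) (by omega)
  rcases min_le_iff.mp hxm with hx2 | hx1 <;> rcases min_le_iff.mp hym with hy2 | hy1
  · -- backward: (a-b).val ≤ k, (b-c).val ≤ k
    refine ⟨(b-c).val, (a-b).val, by omega, by omega, by omega, by omega, ?_, ?_,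
      Or.inr ⟨?_, ?_⟩⟩
    · omega
    · omega
    · rw [castval]; ring
    · rw [castval, castval]; ring
  · -- mixed: (a-b).val ≤ k, (c-b).val ≤ k : contradiction
    exfalso; omega
  · -- mixed: (b-a).val ≤ k, (b-c).val ≤ k : contradiction
    exfalso; omega
  · -- forward: (b-a).val ≤ k, (c-b).val ≤ k
    refine ⟨(b-a).val, (c-b).val, by omega, by omega, by omega, by omega, ?_, ?_,
      Or.inl ⟨?_, ?_⟩⟩
    · omega
    · omega
    · rw [castval]; ring
    · rw [castval, castval]; ring

lemma extend {n k : ℕ} (h : 2*k+2 ≤ n) {p r : ZMod n}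
    (hadj : (cyclePower n k).Adj p r) (hd : (r - p).val ≤ k) :
    ∃ w, (cyclePower n k).Adj p w ∧ ¬ (cyclePower n k).Adj r w ∧ w ≠ r ∧ w ≠ p := by
  haveI : NeZero n := ⟨by omega⟩
  obtain ⟨hne, _⟩ := adj_iff.mp hadj
  have hd1 : 1 ≤ (r - p).val := val_pos (Ne.symm hne)
  set d := (r - p).val with hdd
  have hk1 : 1 ≤ k := by omega
  set w : ZMod n := p - ((k+1-d : ℕ) : ZMod n) with hw
  have em : ((k+1-d : ℕ) : ZMod n).val = k+1-d := by
    rw [ZMod.val_natCast]; exact Nat.mod_eq_of_lt (by omega)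
  have hpw : p - w = ((k+1-d : ℕ) : ZMod n) := by rw [hw]; ring
  have hwp : w ≠ p := by
    intro hh
    have h0 : ((k+1-d : ℕ) : ZMod n) = 0 := by
      rw [← hpw, hh, sub_self]
    rw [h0, ZMod.val_zero] at em
    omega
  have hpwv : (p - w).val = k+1-d := by rw [hpw, em]
  have hrw : r - w = ((k+1 : ℕ) : ZMod n) := by
    have h1 : r - w = (r - p) + ((k+1-d : ℕ) : ZMod n) := by rw [hw]; ring
    rw [h1, ← castval (r - p), ← hdd, ← Nat.cast_add]
    congr 1
    omega
  have hrwv : (r - w).val = k+1 := by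
    rw [hrw, ZMod.val_natCast]; exact Nat.mod_eq_of_lt (by omega)
  have hwr : w ≠ r := by
    intro hh
    rw [hh, sub_self, ZMod.val_zero] at hrwv
    omega
  have hwrv : (w - r).val = n - (k+1) := by
    have := val_sub_add r w (Ne.symm hwr)
    omega
  refine ⟨w, ?_, ?_, hwr, hwp⟩
  · refine adj_iff.mpr ⟨Ne.symm hwp, ?_⟩
    unfold cdist
    refine le_trans (min_le_left _ _) ?_
    rw [hpwv]; omega
  · intro hh
    have := (adj_iff.mp hh).2
    unfold cdist at this
    rw [hrwv, hwrv] at this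
    rcases min_le_iff.mp this with h1 | h1 <;> omega

lemma bip_insert {V : Type*} {G : SimpleGraph V} {A B : Set V} {u v w : V}
    (hDisj : Disjoint A B)
    (hCross : ∀ a ∈ A, ∀ b ∈ B, G.Adj a b)
    (hA : ∀ a ∈ A, ∀ a' ∈ A, ¬ G.Adj a a')
    (hB : ∀ b ∈ B, ∀ b' ∈ B, ¬ G.Adj b b')
    (hAu : ∀ a ∈ A, a = u) (hBv : ∀ b ∈ B, b = v)
    (hwu : G.Adj u w) (hwv : ¬ G.Adj v w) (hwne : w ≠ u) :
    IsCompleteBipartiteSet G (insert w (A ∪ B)) := by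
  refine ⟨A, insert w B, by rw [Set.union_insert], ?_, ?_, hA, ?_⟩
  · refine Set.disjoint_left.mpr ?_
    intro x hxA hx
    rcases Set.mem_insert_iff.mp hx with rfl | hxB
    · exact hwne (hAu x hxA)
    · exact Set.disjoint_left.mp hDisj hxA hxB
  · intro a ha b hb
    rcases Set.mem_insert_iff.mp hb with rfl | hb
    · rw [hAu a ha]; exact hwu
    · exact hCross a ha b hb
  · intro b hb b' hb'
    rcases Set.mem_insert_iff.mp hb with hbw | hbB <;>
      rcases Set.mem_insert_iff.mp hb' with hbw' | hbB'
    · rw [hbw, hbw']; exact G.loopless.irrefl w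
    · rw [hbw, hBv b' hbB']; exact fun hh => hwv hh.symm
    · rw [hbw', hBv b hbB]; exact hwv
    · exact hB b hbB b' hbB'

lemma exists_p3 {n k : ℕ} (h : 2*k+2 ≤ n) {S : Set (ZMod n)}
    (hS : IsBiclique (cyclePower n k) S) :
    ∃ a ∈ S, ∃ b ∈ S, ∃ c ∈ S, IsInducedP3 (cyclePower n k) a b c := by
  haveI : NeZero n := ⟨by omega⟩
  obtain ⟨⟨A, B, hUnion, hDisj, hCross, hA, hB⟩, ⟨u, huS, v, hvS, huv⟩, hmax⟩ := hS
  have main : ∀ u v : ZMod n, u ∈ A → v ∈ B → (cyclePower n k).Adj u v →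
      ∃ a ∈ S, ∃ b ∈ S, ∃ c ∈ S, IsInducedP3 (cyclePower n k) a b c := by
    intro u v huA hvB huv
    have huS : u ∈ S := hUnion ▸ Set.mem_union_left B huA
    have hvS : v ∈ S := hUnion ▸ Set.mem_union_right A hvB
    by_cases hex : ∃ w ∈ S, w ≠ u ∧ w ≠ v
    · obtain ⟨w, hwS, hwu, hwv⟩ := hex
      have hw' : w ∈ A ∪ B := hUnion.symm ▸ hwS
      rcases hw' with hwA | hwB
      · exact ⟨u, huS, v, hvS, w, hwS,
          huv.ne, Ne.symm hwv, Ne.symm hwu, huv,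
          (hCross w hwA v hvB).symm, hA u huA w hwA⟩
      · exact ⟨v, hvS, u, huS, w, hwS,
          huv.ne', Ne.symm hwu, Ne.symm hwv, huv.symm,
          hCross u huA w hwB, hB v hvB w hwB⟩
    · exfalso
      push_neg at hex
      have hSuv : ∀ z ∈ S, z = u ∨ z = v := by
        intro z hz
        by_cases hzu : z = u
        · exact Or.inl hzu
        · exact Or.inr (hex z hz hzu)
      have hAu : ∀ a ∈ A, a = u := by
        intro a ha
        rcases hSuv a (hUnion ▸ Set.mem_union_left B ha) with rfl | rfl
        · rfl
        · exact absurd ha (Set.disjoint_right.mp hDisj hvB)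
      have hBv : ∀ b ∈ B, b = v := by
        intro b hb
        rcases hSuv b (hUnion ▸ Set.mem_union_right A hb) with rfl | rfl
        · exact absurd hb (Set.disjoint_left.mp hDisj huA)
        · rfl
      have hcd : cdist n u v ≤ k := (adj_iff.mp huv).2
      have hwin : ∃ w, w ∉ S ∧ IsCompleteBipartiteSet (cyclePower n k) (insert w S) := by
        rcases min_le_iff.mp hcd with h2 | h1
        · -- (u-v).val ≤ k : extend from p = v, r = u
          obtain ⟨w, hwadj, hwnadj, hwru, hwrv⟩ := extend h huv.symm h2
          refine ⟨w, fun hh => ?_, ?_⟩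
          · rcases hSuv w hh with rfl | rfl
            · exact hwru rfl
            · exact hwrv rfl
          · have := bip_insert (G := cyclePower n k) hDisj.symm
              (fun b hb a ha => (hCross a ha b hb).symm) hB hA hBv hAu
              hwadj (fun hh => hwnadj hh) hwrv
            rwa [Set.union_comm, hUnion] at this
        · -- (v-u).val ≤ k : extend from p = u, r = v
          obtain ⟨w, hwadj, hwnadj, hwrv, hwru⟩ := extend h huv h1
          refine ⟨w, fun hh => ?_, ?_⟩
          · rcases hSuv w hh with rfl | rfl
            · exact hwru rfl
            · exact hwrv rfl
          · have := bip_insert (G := cyclePower n k) hDisj hCross hA hB hAu hBv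
              hwadj (fun hh => hwnadj hh) hwru
            rwa [hUnion] at this
      obtain ⟨w, hwS, hcb⟩ := hwin
      have := hmax (insert w S) (Set.subset_insert w S) hcb
      exact hwS (this ▸ Set.mem_insert w S)
  have hu' : u ∈ A ∪ B := hUnion.symm ▸ huS
  have hv' : v ∈ A ∪ B := hUnion.symm ▸ hvS
  rcases hu' with huA | huB <;> rcases hv' with hvA | hvB
  · exact absurd huv (hA u huA v hvA)
  · exact main u v huA hvB huv
  · exact main v u hvA huB huv.symm
  · exact absurd huv (hB u huB v hvB)

lemma noMono {n k : ℕ} (h : 2*k+2 ≤ n) [NeZero n] (a : ZMod n) (x y : ℕ)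
    (hx1 : 1 ≤ x) (hxk : x ≤ k) (hy1 : 1 ≤ y) (hyk : y ≤ k)
    (hs1 : k+1 ≤ x+y) (hs2 : x+y+(k+1) ≤ n)
    (hc1 : cB n k (a.val/(k+1)) = cB n k ((a + (x:ZMod n)).val/(k+1)))
    (hc2 : cB n k ((a + (x:ZMod n)).val/(k+1))
         = cB n k ((a + (x:ZMod n) + (y:ZMod n)).val/(k+1))) : False := by
  have hv1 : (a + (x : ZMod n)).val = (a.val + x) % n := by
    rw [ZMod.val_add, ZMod.val_natCast]
    conv_lhs => rw [← Nat.mod_eq_of_lt (ZMod.val_lt a)]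
    rw [← Nat.add_mod]
  have hv2 : (a + (x : ZMod n) + (y : ZMod n)).val = (a.val + x + y) % n := by
    rw [ZMod.val_add, hv1, ZMod.val_natCast, ← Nat.add_mod]
  rw [hv1] at hc1 hc2
  rw [hv2] at hc2
  exact core n k a.val x y h (ZMod.val_lt a) hx1 hxk hy1 hyk hs1 hs2 hc1 hc2

end Stmt11Aux

open Stmt11Aux in
/-- `C_n^k` with `n ≥ 2k + 2` has biclique-chromatic number at most 3. -/
theorem stmt_11 (n k : ℕ) (h : 2 * k + 2 ≤ n) :
    bicliqueChromaticNumber (cyclePower n k) ≤ 3 := by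
  haveI : NeZero n := ⟨by omega⟩
  apply Nat.sInf_le
  refine ⟨fun v => ⟨cB n k (v.val / (k+1)) % 3, Nat.mod_lt _ (by omega)⟩, ?_⟩
  intro S hS hmono
  have h' : 2*k+2 ≤ n := by omega
  obtain ⟨a, haS, b, hbS, c, hcS, hp3⟩ := exists_p3 h' hS
  obtain ⟨α, hα⟩ := hmono
  have key : ∀ u w : ZMod n, u ∈ S → w ∈ S →
      cB n k (u.val/(k+1)) = cB n k (w.val/(k+1)) := by
    intro u w hu hw
    have h1 := (hα u hu).trans (hα w hw).symm
    have h2 := congrArg Fin.val h1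
    simp only at h2
    have l1 := cB_lt n k (u.val/(k+1))
    have l2 := cB_lt n k (w.val/(k+1))
    omega
  obtain ⟨x, y, hx1, hxk, hy1, hyk, hs1, hs2, hcase⟩ := p3_struct h' hp3
  rcases hcase with ⟨hb, hc⟩ | ⟨hb, ha⟩
  · refine noMono h' a x y hx1 hxk hy1 hyk hs1 hs2 ?_ ?_
    · rw [← hb]; exact key a b haS hbS
    · rw [← hb] at hc ⊢; rw [← hc]; exact key b c hbS hcS
  · refine noMono h' c x y hx1 hxk hy1 hyk hs1 hs2 ?_ ?_
    · rw [← hb]; exact key c b hcS hbS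
    · rw [← hb] at ha ⊢; rw [← ha]; exact key b a hbS haS
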